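/- Let ω < 0, 0 < α ≤ 1 and 0 < αγ ≤ β ≤ 1. For every θ ∈ (0, απ/2), setting μ(θ) = (|ω| sin θ / sin(απ/2 − θ))^(1/α), the function F is complex-differentiable at the point i·μ(θ) with derivative F′(i·μ(θ)) = −i·μ(θ)^(−1)·[β − αγ·(sin(απ/2 − θ)/sin(απ/2))·exp(−iθ)]·Λ(θ). -/

import Mathlib

open Real Complex Filter Set Topology

/-- The curve parametrization Λ(θ) bounding the stability region. -/
noncomputable def Lam (α β γ ω : ℝ) (θ : ℝ) : ℂ :=
  ((|ω| ^ (β / α) * Real.sin θ ^ (β / α - γ) * Real.sin (α * π / 2) ^ γ *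
      Real.sin (α * π / 2 - θ) ^ (-(β / α)) : ℝ) : ℂ) *
    Complex.exp (Complex.I * ((γ * θ + (β - α * γ) * π / 2 : ℝ) : ℂ))

/-- The characteristic function F(s) = s^(β-αγ) (s^α - ω)^γ (principal branches). -/
noncomputable def Fc (α β γ ω : ℝ) (s : ℂ) : ℂ :=
  s ^ ((β - α * γ : ℝ) : ℂ) * (s ^ ((α : ℝ) : ℂ) - (ω : ℂ)) ^ ((γ : ℝ) : ℂ)

/-- μ(θ) = (|ω| sin θ / sin(απ/2 - θ))^(1/α). -/
noncomputable def muP (α ω : ℝ) (θ : ℝ) : ℝ :=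
  (|ω| * Real.sin θ / Real.sin (α * π / 2 - θ)) ^ (1 / α)

/-- ρ(θ) = |ω| sin(απ/2) / sin(απ/2 - θ). -/
noncomputable def rhoP (α ω : ℝ) (θ : ℝ) : ℝ :=
  |ω| * Real.sin (α * π / 2) / Real.sin (α * π / 2 - θ)

lemma cpow_polar {r t : ℝ} (hr : 0 < r) (ht1 : -π < t) (ht2 : t ≤ π) (c : ℝ) :
    ((r : ℂ) * Complex.exp ((t : ℂ) * Complex.I)) ^ ((c : ℝ) : ℂ) =
      ((r ^ c : ℝ) : ℂ) * Complex.exp (((c * t : ℝ) : ℂ) * Complex.I) := by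
  have hz : (r : ℂ) * Complex.exp ((t : ℂ) * Complex.I) ≠ 0 :=
    mul_ne_zero (by exact_mod_cast hr.ne') (Complex.exp_ne_zero _)
  have habs : ‖(r : ℂ) * Complex.exp ((t : ℂ) * Complex.I)‖ = r := by
    rw [norm_mul, Complex.norm_exp_ofReal_mul_I, Complex.norm_real, Real.norm_eq_abs, abs_of_pos hr, mul_one]
  have harg : Complex.arg ((r : ℂ) * Complex.exp ((t : ℂ) * Complex.I)) = t := by
    rw [Complex.exp_mul_I]
    exact Complex.arg_mul_cos_add_sin_mul_I hr ⟨ht1, ht2⟩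
  have hlog : Complex.log ((r : ℂ) * Complex.exp ((t : ℂ) * Complex.I)) =
      ((Real.log r : ℝ) : ℂ) + (t : ℂ) * Complex.I := by
    rw [Complex.log, habs, harg]
  rw [Complex.cpow_def_of_ne_zero hz, hlog,
    show (((Real.log r : ℝ) : ℂ) + (t : ℂ) * Complex.I) * ((c : ℝ) : ℂ)
        = ((Real.log r * c : ℝ) : ℂ) + ((c * t : ℝ) : ℂ) * Complex.I by push_cast; ring,
    Complex.exp_add]
  congr 1
  rw [Real.rpow_def_of_pos hr, Complex.ofReal_exp]

set_option maxHeartbeats 1000000 in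
theorem F_hasDerivAt_imaginary_root (α β γ ω : ℝ) (hω : ω < 0) (hα0 : 0 < α) (hα1 : α ≤ 1)
    (hαγ : 0 < α * γ) (hβ0 : α * γ ≤ β) (hβ1 : β ≤ 1) :
    ∀ θ ∈ Set.Ioo 0 (α * π / 2),
      HasDerivAt (Fc α β γ ω)
        (-Complex.I * ((muP α ω θ : ℂ))⁻¹ *
          (((β : ℝ) : ℂ) - ((α * γ : ℝ) : ℂ) *
            ((Real.sin (α * π / 2 - θ) / Real.sin (α * π / 2) : ℝ) : ℂ) *
            Complex.exp (-(Complex.I * (θ : ℂ)))) *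
          Lam α β γ ω θ)
        (Complex.I * (muP α ω θ : ℂ)) := by
  intro θ hθ
  obtain ⟨hθ0, hθφ⟩ := hθ
  have hπ := Real.pi_pos
  set φ := α * π / 2 with hφ
  have hφpos : 0 < φ := lt_trans hθ0 hθφ
  have hφle : φ ≤ π / 2 := by rw [hφ]; nlinarith
  have hθπ : θ < π / 2 := lt_of_lt_of_le hθφ hφle
  have hsθ : 0 < Real.sin θ := Real.sin_pos_of_pos_of_lt_pi hθ0 (by linarith)
  have hsφθ : 0 < Real.sin (φ - θ) :=
    Real.sin_pos_of_pos_of_lt_pi (by linarith) (by linarith)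
  have hsφ : 0 < Real.sin φ := Real.sin_pos_of_pos_of_lt_pi hφpos (by linarith)
  have hω' : 0 < |ω| := abs_pos.mpr hω.ne
  have hωneg : ω = -|ω| := by rw [abs_of_neg hω]; ring
  set b := β - α * γ with hb
  set base := |ω| * Real.sin θ / Real.sin (φ - θ) with hbase
  have hbasepos : 0 < base := div_pos (mul_pos hω' hsθ) hsφθ
  set μ := muP α ω θ with hμ
  have hμdef : μ = base ^ (1 / α) := rfl
  have hμpos : 0 < μ := by rw [hμdef]; exact Real.rpow_pos_of_pos hbasepos _
  have hμα : μ ^ α = base := by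
    rw [hμdef, ← Real.rpow_mul hbasepos.le, one_div, inv_mul_cancel₀ hα0.ne', Real.rpow_one]
  set ρ := rhoP α ω θ with hρ
  have hρdef : ρ = |ω| * Real.sin φ / Real.sin (φ - θ) := rfl
  have hρpos : 0 < ρ := div_pos (mul_pos hω' hsφ) hsφθ
  have hbr : base = ρ * (Real.sin θ / Real.sin φ) := by
    rw [hbase, hρdef]; field_simp
  set z := Complex.I * (μ : ℂ) with hzdef
  have hz : z = (μ : ℂ) * Complex.exp (((π / 2 : ℝ) : ℂ) * Complex.I) := by
    rw [hzdef, Complex.exp_mul_I, ← Complex.ofReal_cos, ← Complex.ofReal_sin,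
      Real.cos_pi_div_two, Real.sin_pi_div_two]
    push_cast; ring
  -- powers of z
  have hzc : ∀ c : ℝ, z ^ ((c : ℝ) : ℂ) =
      ((μ ^ c : ℝ) : ℂ) * Complex.exp (((c * (π / 2) : ℝ) : ℂ) * Complex.I) := by
    intro c
    rw [hz]
    exact cpow_polar hμpos (by linarith) (by linarith) c
  have hθIoc1 : -π < θ := by linarith
  have hθIoc2 : θ ≤ π := by linarith
  -- z^α - ω in polar form
  have hzαω : z ^ ((α : ℝ) : ℂ) - (ω : ℂ) =
      ((ρ : ℝ) : ℂ) * Complex.exp (((θ : ℝ) : ℂ) * Complex.I) := by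
    have h1 : Real.sin φ = Real.sin (φ - θ) * Real.cos θ + Real.cos (φ - θ) * Real.sin θ := by
      rw [← Real.sin_add]; congr 1; ring
    have hre : base * Real.cos (α * (π / 2)) - ω = ρ * Real.cos θ := by
      have hcφ : α * (π / 2) = φ := by rw [hφ]; ring
      rw [hcφ, hbase, hρdef, hωneg]
      rw [Real.sin_sub] at *
      have hD := hsφθ.ne'
      have hD' : Real.sin φ * Real.cos θ - Real.sin θ * Real.cos φ ≠ 0 := by
        rw [mul_comm (Real.sin θ)]; exact hD
      rw [abs_neg, abs_abs]
      field_simp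
      ring
    have him : base * Real.sin (α * (π / 2)) = ρ * Real.sin θ := by
      have hcφ : α * (π / 2) = φ := by rw [hφ]; ring
      rw [hcφ, hbase, hρdef]
      field_simp
    rw [hzc α, hμα, Complex.exp_mul_I, Complex.exp_mul_I, ← Complex.ofReal_cos,
      ← Complex.ofReal_sin, ← Complex.ofReal_cos, ← Complex.ofReal_sin]
    have : ((base : ℝ) : ℂ) * (((Real.cos (α * (π / 2)) : ℝ) : ℂ) +
        ((Real.sin (α * (π / 2)) : ℝ) : ℂ) * Complex.I) - (ω : ℂ)
        = ((base * Real.cos (α * (π / 2)) - ω : ℝ) : ℂ) +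
          ((base * Real.sin (α * (π / 2)) : ℝ) : ℂ) * Complex.I := by push_cast; ring
    rw [this, hre, him]
    push_cast; ring
  -- positivity of real part
  have hrepos : 0 < (z ^ ((α : ℝ) : ℂ) - (ω : ℂ)).re := by
    rw [hzαω]
    have : (((ρ : ℝ) : ℂ) * Complex.exp (((θ : ℝ) : ℂ) * Complex.I)).re
        = ρ * Real.cos θ := by
      rw [Complex.mul_re, Complex.exp_ofReal_mul_I_re, Complex.exp_ofReal_mul_I_im]
      simp
    rw [this]
    exact mul_pos hρpos (Real.cos_pos_of_mem_Ioo ⟨by linarith, hθπ⟩)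
  have hzslit : z ∈ Complex.slitPlane := by
    rw [Complex.mem_slitPlane_iff]
    right
    simp only [hzdef, Complex.mul_im, Complex.I_re, Complex.I_im, Complex.ofReal_re,
      Complex.ofReal_im, zero_mul, one_mul, mul_zero, zero_add, add_zero]
    exact hμpos.ne'
  have hwslit : z ^ ((α : ℝ) : ℂ) - (ω : ℂ) ∈ Complex.slitPlane :=
    Complex.mem_slitPlane_iff.mpr (Or.inl hrepos)
  -- the derivatives
  have hd1 : HasDerivAt (fun s : ℂ => s ^ ((b : ℝ) : ℂ))
      (((b : ℝ) : ℂ) * z ^ (((b : ℝ) : ℂ) - 1)) z := by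
    simpa using (hasDerivAt_id z).cpow_const hzslit
  have hd2i : HasDerivAt (fun s : ℂ => s ^ ((α : ℝ) : ℂ) - (ω : ℂ))
      (((α : ℝ) : ℂ) * z ^ (((α : ℝ) : ℂ) - 1)) z := by
    simpa using ((hasDerivAt_id z).cpow_const hzslit).sub_const (ω : ℂ)
  have hd2 : HasDerivAt (fun s : ℂ => (s ^ ((α : ℝ) : ℂ) - (ω : ℂ)) ^ ((γ : ℝ) : ℂ))
      (((γ : ℝ) : ℂ) * (z ^ ((α : ℝ) : ℂ) - (ω : ℂ)) ^ (((γ : ℝ) : ℂ) - 1) *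
        (((α : ℝ) : ℂ) * z ^ (((α : ℝ) : ℂ) - 1))) z :=
    hd2i.cpow_const hwslit
  have hF : HasDerivAt (Fc α β γ ω)
      ((((b : ℝ) : ℂ) * z ^ (((b : ℝ) : ℂ) - 1)) * (z ^ ((α : ℝ) : ℂ) - (ω : ℂ)) ^ ((γ : ℝ) : ℂ) +
        z ^ ((b : ℝ) : ℂ) * (((γ : ℝ) : ℂ) * (z ^ ((α : ℝ) : ℂ) - (ω : ℂ)) ^ (((γ : ℝ) : ℂ) - 1) *
          (((α : ℝ) : ℂ) * z ^ (((α : ℝ) : ℂ) - 1)))) z := hd1.mul hd2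
  -- now rewrite the derivative into the desired form
  -- cast manipulations for exponents
  have hcb : ((b : ℝ) : ℂ) - 1 = ((b - 1 : ℝ) : ℂ) := by push_cast; ring
  have hcα : ((α : ℝ) : ℂ) - 1 = ((α - 1 : ℝ) : ℂ) := by push_cast; ring
  have hcγ : ((γ : ℝ) : ℂ) - 1 = ((γ - 1 : ℝ) : ℂ) := by push_cast; ring
  -- polar forms of all powers
  have h4 := hzc b
  have h5 : z ^ (((b : ℝ) : ℂ) - 1) =
      ((μ ^ (b - 1) : ℝ) : ℂ) * Complex.exp ((((b - 1) * (π / 2) : ℝ) : ℂ) * Complex.I) := by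
    rw [hcb]; exact hzc (b - 1)
  have h6 : z ^ (((α : ℝ) : ℂ) - 1) =
      ((μ ^ (α - 1) : ℝ) : ℂ) * Complex.exp ((((α - 1) * (π / 2) : ℝ) : ℂ) * Complex.I) := by
    rw [hcα]; exact hzc (α - 1)
  have h7 : (z ^ ((α : ℝ) : ℂ) - (ω : ℂ)) ^ ((γ : ℝ) : ℂ) =
      ((ρ ^ γ : ℝ) : ℂ) * Complex.exp (((γ * θ : ℝ) : ℂ) * Complex.I) := by
    rw [hzαω]; exact cpow_polar hρpos hθIoc1 hθIoc2 γ
  have h8 : (z ^ ((α : ℝ) : ℂ) - (ω : ℂ)) ^ (((γ : ℝ) : ℂ) - 1) =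
      ((ρ ^ (γ - 1) : ℝ) : ℂ) * Complex.exp ((((γ - 1) * θ : ℝ) : ℂ) * Complex.I) := by
    rw [hcγ, hzαω]; exact cpow_polar hρpos hθIoc1 hθIoc2 (γ - 1)
  -- rpow relations
  have hμb1 : μ ^ (b - 1) = μ ^ b * μ⁻¹ := by
    rw [Real.rpow_sub hμpos, Real.rpow_one, div_eq_mul_inv]
  have hμα1 : μ ^ (α - 1) = ρ * (Real.sin θ / Real.sin φ) * μ⁻¹ := by
    rw [Real.rpow_sub hμpos, Real.rpow_one, hμα, hbr, div_eq_mul_inv]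
  have hργ1 : ρ ^ (γ - 1) = ρ ^ γ * ρ⁻¹ := by
    rw [Real.rpow_sub hρpos, Real.rpow_one, div_eq_mul_inv]
  -- Lam in terms of μ, ρ
  have hreal : |ω| ^ (β / α) * Real.sin θ ^ (β / α - γ) * Real.sin φ ^ γ *
      Real.sin (φ - θ) ^ (-(β / α)) = μ ^ b * ρ ^ γ := by
    have e1 : μ ^ b = |ω| ^ (β / α - γ) * Real.sin θ ^ (β / α - γ) *
        (Real.sin (φ - θ) ^ (β / α - γ))⁻¹ := by
      rw [hμdef, ← Real.rpow_mul hbasepos.le,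
        show 1 / α * b = β / α - γ by rw [hb]; field_simp,
        hbase, Real.div_rpow (mul_pos hω' hsθ).le hsφθ.le,
        Real.mul_rpow hω'.le hsθ.le, div_eq_mul_inv]
    have e2 : ρ ^ γ = |ω| ^ γ * Real.sin φ ^ γ * (Real.sin (φ - θ) ^ γ)⁻¹ := by
      rw [hρdef, Real.div_rpow (mul_pos hω' hsφ).le hsφθ.le,
        Real.mul_rpow hω'.le hsφ.le, div_eq_mul_inv]
    have hω1 : |ω| ^ (β / α) = |ω| ^ (β / α - γ) * |ω| ^ γ := by
      rw [← Real.rpow_add hω', sub_add_cancel]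
    have hs1 : Real.sin (φ - θ) ^ (-(β / α)) =
        (Real.sin (φ - θ) ^ (β / α - γ))⁻¹ * (Real.sin (φ - θ) ^ γ)⁻¹ := by
      rw [← mul_inv, ← Real.rpow_add hsφθ, sub_add_cancel, Real.rpow_neg hsφθ.le]
    rw [hω1, hs1, e1, e2]; ring
  have hΛ : Lam α β γ ω θ = ((μ ^ b * ρ ^ γ : ℝ) : ℂ) *
      Complex.exp (((γ * θ + b * (π / 2) : ℝ) : ℂ) * Complex.I) := by
    rw [Lam, ← hφ, ← hb, hreal]
    congr 1
    rw [mul_comm Complex.I]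
    congr 2
    push_cast; ring
  -- exponential bookkeeping
  have hexadd : ∀ s t : ℝ, Complex.exp ((s : ℂ) * Complex.I) * Complex.exp ((t : ℂ) * Complex.I)
      = Complex.exp (((s + t : ℝ) : ℂ) * Complex.I) := by
    intro s t
    rw [← Complex.exp_add]
    congr 1
    push_cast; ring
  have hexneg : Complex.exp (((-(π / 2) : ℝ) : ℂ) * Complex.I) = -Complex.I := by
    rw [Complex.exp_mul_I, ← Complex.ofReal_cos, ← Complex.ofReal_sin,
      Real.cos_neg, Real.sin_neg, Real.cos_pi_div_two, Real.sin_pi_div_two]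
    push_cast; ring
  have hexp1 : Complex.exp ((((b - 1) * (π / 2) : ℝ) : ℂ) * Complex.I) *
        Complex.exp (((γ * θ : ℝ) : ℂ) * Complex.I)
      = Complex.exp (((γ * θ + b * (π / 2) : ℝ) : ℂ) * Complex.I) * -Complex.I := by
    rw [hexadd, ← hexneg, hexadd]
    congr 2; push_cast; ring
  have hexp2 : Complex.exp (((b * (π / 2) : ℝ) : ℂ) * Complex.I) *
        (Complex.exp ((((γ - 1) * θ : ℝ) : ℂ) * Complex.I) *
          Complex.exp ((((α - 1) * (π / 2) : ℝ) : ℂ) * Complex.I))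
      = Complex.exp (((γ * θ + b * (π / 2) : ℝ) : ℂ) * Complex.I) * -Complex.I *
          Complex.exp (((φ - θ : ℝ) : ℂ) * Complex.I) := by
    rw [hexadd, hexadd, ← hexneg, hexadd, hexadd]
    congr 2; push_cast; rw [hφ]; push_cast; ring
  have hexθ : Complex.exp (-(Complex.I * (θ : ℂ))) =
      Complex.exp (((-θ : ℝ) : ℂ) * Complex.I) := by
    congr 1; push_cast; ring
  -- key trigonometric identity
  have hkey : ((Real.sin θ : ℝ) : ℂ) * Complex.exp (((φ - θ : ℝ) : ℂ) * Complex.I) +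
        ((Real.sin (φ - θ) : ℝ) : ℂ) * Complex.exp (((-θ : ℝ) : ℂ) * Complex.I)
      = ((Real.sin φ : ℝ) : ℂ) := by
    have h1 : Real.sin φ = Real.sin (φ - θ) * Real.cos θ + Real.cos (φ - θ) * Real.sin θ := by
      rw [← Real.sin_add]; congr 1; ring
    rw [Complex.exp_mul_I, Complex.exp_mul_I, ← Complex.ofReal_cos, ← Complex.ofReal_sin,
      ← Complex.ofReal_cos, ← Complex.ofReal_sin, Real.cos_neg, Real.sin_neg, h1]
    push_cast; ring
  -- bracket identity
  have hsφC : ((Real.sin φ : ℝ) : ℂ) ≠ 0 := by exact_mod_cast hsφ.ne'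
  have hbr2 : ((β : ℝ) : ℂ) - ((α * γ : ℝ) : ℂ) *
      ((Real.sin (φ - θ) / Real.sin φ : ℝ) : ℂ) *
        Complex.exp (((-θ : ℝ) : ℂ) * Complex.I)
      = ((b : ℝ) : ℂ) + ((α * γ : ℝ) : ℂ) *
        (((Real.sin θ : ℝ) : ℂ) / ((Real.sin φ : ℝ) : ℂ)) *
          Complex.exp (((φ - θ : ℝ) : ℂ) * Complex.I) := by
    have hβ : ((β : ℝ) : ℂ) = ((b : ℝ) : ℂ) + ((α * γ : ℝ) : ℂ) := by
      rw [hb]; push_cast; ring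
    have hinv : ((Real.sin φ : ℝ) : ℂ) * (((Real.sin φ : ℝ) : ℂ))⁻¹ = 1 :=
      mul_inv_cancel₀ hsφC
    rw [hβ, Complex.ofReal_div]
    linear_combination (-((α * γ : ℝ) : ℂ) * (((Real.sin φ : ℝ) : ℂ))⁻¹) * hkey -
      ((α * γ : ℝ) : ℂ) * hinv
  -- final computation
  have hμC : ((μ : ℝ) : ℂ) ≠ 0 := by exact_mod_cast hμpos.ne'
  have hρC : ((ρ : ℝ) : ℂ) ≠ 0 := by exact_mod_cast hρpos.ne'
  have hμC : ((μ : ℝ) : ℂ) ≠ 0 := by exact_mod_cast hμpos.ne'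
  have hρC : ((ρ : ℝ) : ℂ) ≠ 0 := by exact_mod_cast hρpos.ne'
  have hD : (((b : ℝ) : ℂ) * z ^ (((b : ℝ) : ℂ) - 1)) *
        (z ^ ((α : ℝ) : ℂ) - (ω : ℂ)) ^ ((γ : ℝ) : ℂ) +
      z ^ ((b : ℝ) : ℂ) * (((γ : ℝ) : ℂ) * (z ^ ((α : ℝ) : ℂ) - (ω : ℂ)) ^ (((γ : ℝ) : ℂ) - 1) *
        (((α : ℝ) : ℂ) * z ^ (((α : ℝ) : ℂ) - 1)))
      = -Complex.I * ((μ : ℝ) : ℂ)⁻¹ *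
          (((β : ℝ) : ℂ) - ((α * γ : ℝ) : ℂ) *
            ((Real.sin (φ - θ) / Real.sin φ : ℝ) : ℂ) *
            Complex.exp (-(Complex.I * (θ : ℂ)))) *
          Lam α β γ ω θ := by
    rw [h4, h5, h6, h7, h8, hΛ, hexθ, hbr2, hμb1, hμα1, hργ1]
    rw [show (((b : ℝ) : ℂ) * (((μ ^ b * μ⁻¹ : ℝ) : ℂ) *
            Complex.exp ((((b - 1) * (π / 2) : ℝ) : ℂ) * Complex.I))) *
          (((ρ ^ γ : ℝ) : ℂ) * Complex.exp (((γ * θ : ℝ) : ℂ) * Complex.I)) +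
        ((μ ^ b : ℝ) : ℂ) * Complex.exp (((b * (π / 2) : ℝ) : ℂ) * Complex.I) *
          (((γ : ℝ) : ℂ) * (((ρ ^ γ * ρ⁻¹ : ℝ) : ℂ) *
              Complex.exp ((((γ - 1) * θ : ℝ) : ℂ) * Complex.I)) *
            (((α : ℝ) : ℂ) * (((ρ * (Real.sin θ / Real.sin φ) * μ⁻¹ : ℝ) : ℂ) *
              Complex.exp ((((α - 1) * (π / 2) : ℝ) : ℂ) * Complex.I))))
        = ((b : ℝ) : ℂ) * ((μ ^ b * μ⁻¹ : ℝ) : ℂ) * ((ρ ^ γ : ℝ) : ℂ) *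
            (Complex.exp ((((b - 1) * (π / 2) : ℝ) : ℂ) * Complex.I) *
              Complex.exp (((γ * θ : ℝ) : ℂ) * Complex.I)) +
          ((γ : ℝ) : ℂ) * ((α : ℝ) : ℂ) * ((μ ^ b : ℝ) : ℂ) *
            (((ρ ^ γ * ρ⁻¹ : ℝ) : ℂ) * ((ρ * (Real.sin θ / Real.sin φ) * μ⁻¹ : ℝ) : ℂ)) *
            (Complex.exp (((b * (π / 2) : ℝ) : ℂ) * Complex.I) *
              (Complex.exp ((((γ - 1) * θ : ℝ) : ℂ) * Complex.I) *
                Complex.exp ((((α - 1) * (π / 2) : ℝ) : ℂ) * Complex.I))) from by ring]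
    have h9 : ρ ^ γ * ρ⁻¹ * (ρ * (Real.sin θ / Real.sin φ) * μ⁻¹)
        = ρ ^ γ * (Real.sin θ / Real.sin φ) * μ⁻¹ := by
      field_simp
    rw [hexp1, hexp2, ← Complex.ofReal_mul (ρ ^ γ * ρ⁻¹) (ρ * (Real.sin θ / Real.sin φ) * μ⁻¹),
      h9]
    push_cast
    ring
  rw [← hD]
  exact hF
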